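/- Let σ ≥ 0, x* > 0, B > 0 and θ* ∈ (0,1). Suppose V : (0,x*] → ℝ and p : (0,x*] → (0,1) are continuously differentiable and satisfy, for all x ∈ (0,x*]: r·V(x) = ( (λ+r)/p(x) + σ² )·x·V'(x) and (r+λ)·(p(x) − 1) = ( (λ+r)/p(x) + σ² )·x·p'(x), with V(x*) = B and p(x*) = θ*. Then for every x ∈ (0,x*]: p(x) = (θ*·x*/x)·( (1 − p(x))/(1 − θ*) )^{(σ²+λ+r)/(λ+r)} and V(x) = B·( (1 − p(x))/(1 − θ*) )^{r/(r+λ)}; moreover p(x) → 1 and V(x) → 0 as x → 0⁺. -/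

import Mathlib

open Set Filter

theorem stmt_15
    (r mu lam sig : ℝ) (hmu : 0 ≤ mu) (hr : mu < r) (hlam : 0 ≤ lam) (hsig : 0 ≤ sig)
    (xs B th : ℝ) (hxs : 0 < xs) (hB : 0 < B) (hth : th ∈ Set.Ioo (0:ℝ) 1)
    (V p V' p' : ℝ → ℝ)
    (hVd : ∀ x ∈ Set.Ioc (0:ℝ) xs, HasDerivAt V (V' x) x)
    (hpd : ∀ x ∈ Set.Ioc (0:ℝ) xs, HasDerivAt p (p' x) x)
    (hV'c : ContinuousOn V' (Set.Ioc 0 xs)) (hp'c : ContinuousOn p' (Set.Ioc 0 xs))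
    (hpr : ∀ x ∈ Set.Ioc (0:ℝ) xs, p x ∈ Set.Ioo (0:ℝ) 1)
    (hodeV : ∀ x ∈ Set.Ioc (0:ℝ) xs, r * V x = ((lam + r) / p x + sig ^ 2) * x * V' x)
    (hodep : ∀ x ∈ Set.Ioc (0:ℝ) xs,
      (r + lam) * (p x - 1) = ((lam + r) / p x + sig ^ 2) * x * p' x)
    (hVx : V xs = B) (hpx : p xs = th) :
    (∀ x ∈ Set.Ioc (0:ℝ) xs,
      p x = (th * xs / x) * ((1 - p x) / (1 - th)) ^ ((sig ^ 2 + lam + r) / (lam + r)) ∧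
      V x = B * ((1 - p x) / (1 - th)) ^ (r / (r + lam))) ∧
    Filter.Tendsto p (nhdsWithin 0 (Set.Ioi 0)) (nhds 1) ∧
    Filter.Tendsto V (nhdsWithin 0 (Set.Ioi 0)) (nhds 0) := by
  obtain ⟨hth0, hth1⟩ := hth
  have hr0 : 0 < r := lt_of_le_of_lt hmu hr
  have hlr : 0 < lam + r := by linarith
  have hrl : 0 < r + lam := by linarith
  set α : ℝ := (sig ^ 2 + lam + r) / (lam + r) with hαdef
  set β : ℝ := r / (r + lam) with hβdef
  have hα0 : 0 < α := div_pos (by positivity) hlr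
  have hβ0 : 0 < β := div_pos hr0 hrl
  have hth1' : (0:ℝ) < 1 - th := by linarith
  set G : ℝ → ℝ := fun y => p y * y * (1 - p y) ^ (-α) with hGdef
  set H : ℝ → ℝ := fun y => V y * (1 - p y) ^ (-β) with hHdef
  -- derivatives are zero
  have hGd : ∀ x ∈ Set.Ioc (0:ℝ) xs, HasDerivAt G 0 x := by
    intro x hx
    obtain ⟨hx0, hxxs⟩ := hx
    obtain ⟨hq0, hq1⟩ := hpr x ⟨hx0, hxxs⟩
    have hs : 0 < 1 - p x := by linarith
    have hA : 0 < lam + r + sig ^ 2 * p x := by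
      have : 0 ≤ sig ^ 2 * p x := mul_nonneg (sq_nonneg sig) hq0.le
      linarith
    have hpd' := hpd x ⟨hx0, hxxs⟩
    have hone : HasDerivAt (fun y => 1 - p y) (-p' x) x := by
      have h1 := (hasDerivAt_const x (1:ℝ)).sub hpd'; rw [zero_sub] at h1; exact h1
    have hrp : HasDerivAt (fun y => (1 - p y) ^ (-α))
        ((-α * (1 - p x) ^ (-α - 1)) * (-p' x)) x := by
      have := (Real.hasDerivAt_rpow_const (x := 1 - p x) (p := -α) (Or.inl hs.ne')).comp x hone
      simpa [Function.comp_def] using this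
    have hder := (hpd'.mul (hasDerivAt_id x)).mul hrp
    have hD : p' x = (r + lam) * (p x - 1) * p x / ((lam + r + sig ^ 2 * p x) * x) := by
      have h := hodep x ⟨hx0, hxxs⟩
      rw [eq_div_iff (by positivity)]
      field_simp at h
      linear_combination -h
    have h0 : (p' x * x + p x * 1) * (1 - p x) ^ (-α) +
        p x * x * ((-α * (1 - p x) ^ (-α - 1)) * (-p' x)) = 0 := by
      have hrw : (1 - p x) ^ (-α) = (1 - p x) ^ (-α - 1) * (1 - p x) := by
        rw [← Real.rpow_add_one hs.ne', show -α - 1 + 1 = -α by ring]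
      rw [hrw, hD, hαdef]
      field_simp
      ring
    have hder' : HasDerivAt G ((p' x * x + p x * 1) * (1 - p x) ^ (-α) +
        p x * x * (-α * (1 - p x) ^ (-α - 1) * -p' x)) x := by
      exact hder
    rw [h0] at hder'
    exact hder'
  have hHd : ∀ x ∈ Set.Ioc (0:ℝ) xs, HasDerivAt H 0 x := by
    intro x hx
    obtain ⟨hx0, hxxs⟩ := hx
    obtain ⟨hq0, hq1⟩ := hpr x ⟨hx0, hxxs⟩
    have hs : 0 < 1 - p x := by linarith
    have hA : 0 < lam + r + sig ^ 2 * p x := by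
      have : 0 ≤ sig ^ 2 * p x := mul_nonneg (sq_nonneg sig) hq0.le
      linarith
    have hpd' := hpd x ⟨hx0, hxxs⟩
    have hVd' := hVd x ⟨hx0, hxxs⟩
    have hone : HasDerivAt (fun y => 1 - p y) (-p' x) x := by
      have h1 := (hasDerivAt_const x (1:ℝ)).sub hpd'; rw [zero_sub] at h1; exact h1
    have hrp : HasDerivAt (fun y => (1 - p y) ^ (-β))
        ((-β * (1 - p x) ^ (-β - 1)) * (-p' x)) x := by
      have := (Real.hasDerivAt_rpow_const (x := 1 - p x) (p := -β) (Or.inl hs.ne')).comp x hone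
      simpa [Function.comp_def] using this
    have hder := hVd'.mul hrp
    have hD : p' x = (r + lam) * (p x - 1) * p x / ((lam + r + sig ^ 2 * p x) * x) := by
      have h := hodep x ⟨hx0, hxxs⟩
      rw [eq_div_iff (by positivity)]
      field_simp at h
      linear_combination -h
    have hDV : V' x = r * V x * p x / ((lam + r + sig ^ 2 * p x) * x) := by
      have h := hodeV x ⟨hx0, hxxs⟩
      rw [eq_div_iff (by positivity)]
      field_simp at h
      linear_combination -h
    have h0 : V' x * (1 - p x) ^ (-β) +
        V x * ((-β * (1 - p x) ^ (-β - 1)) * (-p' x)) = 0 := by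
      have hrw : (1 - p x) ^ (-β) = (1 - p x) ^ (-β - 1) * (1 - p x) := by
        rw [← Real.rpow_add_one hs.ne', show -β - 1 + 1 = -β by ring]
      rw [hrw, hD, hDV, hβdef]
      field_simp
      ring
    have hder' : HasDerivAt H (V' x * (1 - p x) ^ (-β) +
        V x * (-β * (1 - p x) ^ (-β - 1) * -p' x)) x := by
      exact hder
    rw [h0] at hder'
    exact hder'
  -- constancy
  have hGc : ∀ x ∈ Set.Ioc (0:ℝ) xs, G x = G xs := by
    intro x hx
    have hsub : Set.Icc x xs ⊆ Set.Ioc 0 xs := fun y hy => ⟨lt_of_lt_of_le hx.1 hy.1, hy.2⟩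
    have := constant_of_has_deriv_right_zero (f := G) (a := x) (b := xs)
      (fun y hy => ((hGd y (hsub hy)).continuousAt).continuousWithinAt)
      (fun y hy => ((hGd y (hsub (Set.Ico_subset_Icc_self hy))).hasDerivWithinAt))
    exact (this xs ⟨hx.2, le_refl xs⟩).symm
  have hHc : ∀ x ∈ Set.Ioc (0:ℝ) xs, H x = H xs := by
    intro x hx
    have hsub : Set.Icc x xs ⊆ Set.Ioc 0 xs := fun y hy => ⟨lt_of_lt_of_le hx.1 hy.1, hy.2⟩
    have := constant_of_has_deriv_right_zero (f := H) (a := x) (b := xs)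
      (fun y hy => ((hHd y (hsub hy)).continuousAt).continuousWithinAt)
      (fun y hy => ((hHd y (hsub (Set.Ico_subset_Icc_self hy))).hasDerivWithinAt))
    exact (this xs ⟨hx.2, le_refl xs⟩).symm
  -- the closed-form identities
  have main : ∀ x ∈ Set.Ioc (0:ℝ) xs,
      p x = (th * xs / x) * ((1 - p x) / (1 - th)) ^ α ∧
      V x = B * ((1 - p x) / (1 - th)) ^ β := by
    intro x hx
    obtain ⟨hq0, hq1⟩ := hpr x hx
    have hs : 0 < 1 - p x := by linarith
    have hx0 := hx.1
    have hg := hGc x hx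
    have hh := hHc x hx
    simp only [hGdef, hHdef, hpx, hVx] at hg hh
    have e1 : ((1 - p x) / (1 - th)) ^ α = (1 - p x) ^ α / (1 - th) ^ α :=
      Real.div_rpow hs.le hth1'.le α
    have e2 : ((1 - p x) / (1 - th)) ^ β = (1 - p x) ^ β / (1 - th) ^ β :=
      Real.div_rpow hs.le hth1'.le β
    have hp1 : (0:ℝ) < (1 - p x) ^ α := Real.rpow_pos_of_pos hs α
    have hp2 : (0:ℝ) < (1 - th) ^ α := Real.rpow_pos_of_pos hth1' α
    have hp3 : (0:ℝ) < (1 - p x) ^ β := Real.rpow_pos_of_pos hs β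
    have hp4 : (0:ℝ) < (1 - th) ^ β := Real.rpow_pos_of_pos hth1' β
    rw [Real.rpow_neg hs.le, Real.rpow_neg hth1'.le] at hg
    rw [Real.rpow_neg hs.le, Real.rpow_neg hth1'.le] at hh
    constructor
    · rw [e1]
      field_simp at hg ⊢
      linear_combination hg
    · rw [e2]
      field_simp at hh ⊢
      linear_combination hh
  -- bound on 1 - p
  have hbound : ∀ x ∈ Set.Ioc (0:ℝ) xs,
      1 - p x ≤ (x * (1 - th) ^ α / (th * xs)) ^ (1/α) := by
    intro x hx
    obtain ⟨hq0, hq1⟩ := hpr x hx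
    have hs : 0 < 1 - p x := by linarith
    have hx0 := hx.1
    have h1 := (main x hx).1
    have e1 : ((1 - p x) / (1 - th)) ^ α = (1 - p x) ^ α / (1 - th) ^ α :=
      Real.div_rpow hs.le hth1'.le α
    rw [e1] at h1
    have hp2 : (0:ℝ) < (1 - th) ^ α := Real.rpow_pos_of_pos hth1' α
    have h1' : th * xs * (1 - p x) ^ α = p x * x * (1 - th) ^ α := by
      field_simp at h1
      linear_combination -h1
    have key : (1 - p x) ^ α ≤ x * (1 - th) ^ α / (th * xs) := by
      rw [le_div_iff₀ (by positivity : (0:ℝ) < th * xs)]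
      calc (1 - p x) ^ α * (th * xs) = p x * (x * (1 - th) ^ α) := by linear_combination h1'
        _ ≤ 1 * (x * (1 - th) ^ α) :=
            mul_le_mul_of_nonneg_right hq1.le (mul_pos hx0 hp2).le
        _ = x * (1 - th) ^ α := one_mul _
    calc 1 - p x = ((1 - p x) ^ α) ^ (1/α) := by
          rw [← Real.rpow_mul hs.le, mul_one_div, div_self hα0.ne', Real.rpow_one]
      _ ≤ (x * (1 - th) ^ α / (th * xs)) ^ (1/α) := by
          apply Real.rpow_le_rpow (Real.rpow_pos_of_pos hs α).le key (by positivity)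
  -- limit of 1 - p
  have hmem : Set.Ioc (0:ℝ) xs ∈ nhdsWithin (0:ℝ) (Set.Ioi 0) :=
    Ioc_mem_nhdsGT_of_mem ⟨le_refl 0, hxs⟩
  have htend1 : Filter.Tendsto (fun x => 1 - p x) (nhdsWithin 0 (Set.Ioi 0)) (nhds 0) := by
    have hupper : Filter.Tendsto (fun x : ℝ => (x * (1 - th) ^ α / (th * xs)) ^ (1/α))
        (nhdsWithin 0 (Set.Ioi 0)) (nhds 0) := by
      have hc : Filter.Tendsto (fun x : ℝ => x * (1 - th) ^ α / (th * xs))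
          (nhdsWithin 0 (Set.Ioi 0)) (nhds 0) := by
        have : Continuous (fun x : ℝ => x * (1 - th) ^ α / (th * xs)) :=
          (continuous_id.mul continuous_const).div_const _
        have h0 : (fun x : ℝ => x * (1 - th) ^ α / (th * xs)) 0 = 0 := by simp
        simpa [h0] using (this.tendsto 0).mono_left nhdsWithin_le_nhds
      have hcont : ContinuousAt (fun y : ℝ => y ^ (1/α)) 0 :=
        Real.continuousAt_rpow_const 0 (1/α) (Or.inr (by positivity))
      have := hcont.tendsto.comp hc
      simpa [Function.comp_def, Real.zero_rpow (inv_ne_zero hα0.ne')] using this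
    apply tendsto_of_tendsto_of_tendsto_of_le_of_le' tendsto_const_nhds hupper
    · filter_upwards [hmem] with x hx
      have := (hpr x hx).2
      linarith
    · filter_upwards [hmem] with x hx
      exact hbound x hx
  have htendp : Filter.Tendsto p (nhdsWithin 0 (Set.Ioi 0)) (nhds 1) := by
    have h1 : Filter.Tendsto (fun _ : ℝ => (1:ℝ)) (nhdsWithin 0 (Set.Ioi 0)) (nhds 1) :=
      tendsto_const_nhds
    have := h1.sub htend1
    simpa using this
  refine ⟨main, htendp, ?_⟩
  -- limit of V
  have hq : Filter.Tendsto (fun x => (1 - p x) / (1 - th)) (nhdsWithin 0 (Set.Ioi 0)) (nhds 0) := by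
    have := htend1.div_const (1 - th)
    simpa using this
  have hcont : ContinuousAt (fun y : ℝ => B * y ^ β) 0 := by
    exact (continuousAt_const.mul (Real.continuousAt_rpow_const 0 β (Or.inr hβ0.le)))
  have hcomp := hcont.tendsto.comp hq
  have heq : ∀ᶠ x in nhdsWithin (0:ℝ) (Set.Ioi 0),
      (fun y : ℝ => B * y ^ β) ((1 - p x) / (1 - th)) = V x := by
    filter_upwards [hmem] with x hx
    exact ((main x hx).2).symm
  have := hcomp.congr' heq
  simpa [Real.zero_rpow hβ0.ne'] using this
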